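/- For all real numbers a, b, c, p > 0, the integral ∫_0^∞ exp( − a z^{2/p} / (b + c z^{1/p}) ) dz is finite and bounded by c_p · max( (b/a)^{p/2}, (c/a)^p ), where c_p = 2 ∫_0^∞ exp( − (1/2) (min(z, √z))^{2/p} ) dz, and c_p is finite. -/

import Mathlib

open MeasureTheory Real Set

lemma aux_exp_rpow_integrable (p : ℝ) (hp : 0 < p) :
    IntegrableOn (fun x : ℝ => Real.exp (-(1 / 2) * x ^ (1 / p))) (Set.Ioi 0) := by
  refine (integrableOn_Ioi_comp_rpow_iff'
    (fun x : ℝ => Real.exp (-(1 / 2) * x ^ (1 / p))) hp.ne').mp ?_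
  have key : IntegrableOn (fun x : ℝ => x ^ (p - 1) * Real.exp (-(1 / 2) * x ^ (1 : ℝ)))
      (Set.Ioi 0) :=
    integrableOn_rpow_mul_exp_neg_mul_rpow (by linarith) zero_lt_one (by norm_num)
  refine key.congr_fun (fun x hx => ?_) measurableSet_Ioi
  have hx : (0 : ℝ) < x := hx
  rw [smul_eq_mul, ← Real.rpow_mul hx.le, mul_one_div, div_self hp.ne', Real.rpow_one]
  simp only [Real.rpow_one]

lemma aux_g_integrable (p : ℝ) (hp : 0 < p) :
    IntegrableOn (fun z : ℝ => Real.exp (-(1 / 2) * (min z (Real.sqrt z)) ^ (2 / p)))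
      (Set.Ioi 0) := by
  have hcont : Continuous fun z : ℝ => Real.exp (-(1 / 2) * (min z (Real.sqrt z)) ^ (2 / p)) := by
    apply Real.continuous_exp.comp
    apply Continuous.mul continuous_const
    exact (continuous_id.min Real.continuous_sqrt).rpow_const (fun x => Or.inr (by positivity))
  rw [← Set.Ioc_union_Ioi_eq_Ioi (zero_le_one : (0:ℝ) ≤ 1), integrableOn_union]
  constructor
  · exact hcont.integrableOn_Ioc
  · have := (aux_exp_rpow_integrable p hp).mono_set (Set.Ioi_subset_Ioi zero_le_one)
    refine this.congr_fun (fun x hx => ?_) measurableSet_Ioi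
    have hx1 : (1 : ℝ) ≤ x := le_of_lt hx
    have hx0 : (0 : ℝ) ≤ x := by linarith
    have hsle : Real.sqrt x ≤ x := by
      nlinarith [Real.sq_sqrt hx0, Real.sqrt_nonneg x, sq_nonneg (Real.sqrt x - 1)]
    rw [min_eq_right hsle, Real.sqrt_eq_rpow, ← Real.rpow_mul hx0,
      show (1:ℝ)/2*(2/p) = 1/p by ring]

set_option maxHeartbeats 1000000 in
/-- For all real `a, b, c, p > 0`, the integral
`∫_0^∞ exp(−a z^{2/p} / (b + c z^{1/p})) dz` is finite and bounded by
`c_p · max((b/a)^{p/2}, (c/a)^p)`, where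
`c_p = 2 ∫_0^∞ exp(−(1/2)(min(z, √z))^{2/p}) dz` is finite. -/
theorem stmt_1 (a b c p : ℝ) (ha : 0 < a) (hb : 0 < b) (hc : 0 < c) (hp : 0 < p) :
    IntegrableOn (fun z : ℝ => Real.exp (-(a * z ^ (2 / p)) / (b + c * z ^ (1 / p))))
      (Set.Ioi 0) ∧
    IntegrableOn (fun z : ℝ => Real.exp (-(1 / 2) * (min z (Real.sqrt z)) ^ (2 / p)))
      (Set.Ioi 0) ∧
    (∫ z in Set.Ioi (0 : ℝ), Real.exp (-(a * z ^ (2 / p)) / (b + c * z ^ (1 / p)))) ≤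
      (2 * ∫ z in Set.Ioi (0 : ℝ), Real.exp (-(1 / 2) * (min z (Real.sqrt z)) ^ (2 / p))) *
        max ((b / a) ^ (p / 2)) ((c / a) ^ p) := by
  set M : ℝ := max ((b / a) ^ (p / 2)) ((c / a) ^ p) with hM_def
  have hM : 0 < M := lt_max_of_lt_left (Real.rpow_pos_of_pos (div_pos hb ha) _)
  set g : ℝ → ℝ := fun z => Real.exp (-(1 / 2) * (min z (Real.sqrt z)) ^ (2 / p)) with hg_def
  have hg_int : IntegrableOn g (Set.Ioi 0) := aux_g_integrable p hp
  have hg_nonneg : ∀ z, 0 ≤ g z := fun z => (Real.exp_pos _).le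
  -- key pointwise inequality
  have key : ∀ z ∈ Set.Ioi (0 : ℝ),
      Real.exp (-(a * z ^ (2 / p)) / (b + c * z ^ (1 / p))) ≤ g (M⁻¹ * z) := by
    intro z hz
    have hz : (0 : ℝ) < z := hz
    set u : ℝ := M⁻¹ * z with hu_def
    have hu : 0 < u := by positivity
    have hzMu : z = M * u := by rw [hu_def]; field_simp
    have hbM : b ≤ a * M ^ (2 / p) := by
      have h1 : (b / a) ^ (p / 2) ≤ M := le_max_left _ _
      have h2 : ((b / a) ^ (p / 2)) ^ (2 / p) ≤ M ^ (2 / p) :=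
        Real.rpow_le_rpow (by positivity) h1 (by positivity)
      rw [← Real.rpow_mul (by positivity), div_mul_div_comm, mul_comm,
        div_self (by positivity), Real.rpow_one] at h2
      have := (div_le_iff₀ ha).mp h2
      linarith [mul_comm (b / a) a]
    have hcM : c ≤ a * M ^ (1 / p) := by
      have h1 : (c / a) ^ p ≤ M := le_max_right _ _
      have h2 : ((c / a) ^ p) ^ (1 / p) ≤ M ^ (1 / p) :=
        Real.rpow_le_rpow (by positivity) h1 (by positivity)
      rw [← Real.rpow_mul (by positivity), mul_one_div, div_self hp.ne', Real.rpow_one] at h2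
      have := (div_le_iff₀ ha).mp h2
      linarith
    have hz1 : z ^ (1 / p) = M ^ (1 / p) * u ^ (1 / p) := by
      rw [hzMu, Real.mul_rpow hM.le hu.le]
    have hz2 : z ^ (2 / p) = M ^ (2 / p) * u ^ (2 / p) := by
      rw [hzMu, Real.mul_rpow hM.le hu.le]
    have hMM : M ^ (1 / p) * M ^ (1 / p) = M ^ (2 / p) := by
      rw [← Real.rpow_add hM]; congr 1; ring
    have huu : u ^ (1 / p) * u ^ (1 / p) = u ^ (2 / p) := by
      rw [← Real.rpow_add hu]; congr 1; ring
    have hden : 0 < b + c * z ^ (1 / p) := by positivity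
    set m : ℝ := (min u (Real.sqrt u)) ^ (2 / p) with hm_def
    have hm : 0 ≤ m := Real.rpow_nonneg (le_min hu.le (Real.sqrt_nonneg u)) _
    clear_value M u m
    have central : m * (1 + u ^ (1 / p)) ≤ 2 * u ^ (2 / p) := by
      rcases le_total u 1 with h1 | h1
      · have hmin : min u (Real.sqrt u) = u := by
          apply min_eq_left
          nlinarith [Real.sq_sqrt hu.le, Real.sqrt_nonneg u, sq_nonneg (Real.sqrt u - 1)]
        rw [hm_def, hmin]
        have hle : u ^ (1 / p) ≤ 1 := Real.rpow_le_one hu.le h1 (by positivity)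
        nlinarith [Real.rpow_nonneg hu.le (2 / p)]
      · have hsle : Real.sqrt u ≤ u := by
          nlinarith [Real.sq_sqrt hu.le, Real.sqrt_nonneg u, sq_nonneg (Real.sqrt u - 1)]
        have hsq : (Real.sqrt u) ^ (2 / p) = u ^ (1 / p) := by
          rw [Real.sqrt_eq_rpow, ← Real.rpow_mul hu.le, show (1:ℝ)/2*(2/p) = 1/p by ring]
        rw [hm_def, min_eq_right hsle, hsq]
        have hge : 1 ≤ u ^ (1 / p) := Real.one_le_rpow h1 (by positivity)
        nlinarith [huu]
    have hbound : b + c * z ^ (1 / p) ≤ a * M ^ (2 / p) * (1 + u ^ (1 / p)) := by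
      have h2 : c * z ^ (1 / p) ≤ a * M ^ (2 / p) * u ^ (1 / p) := by
        rw [hz1, ← hMM]
        have hup : 0 ≤ u ^ (1 / p) := Real.rpow_nonneg hu.le _
        have hMp : 0 ≤ M ^ (1 / p) := Real.rpow_nonneg hM.le _
        have := mul_le_mul_of_nonneg_right hcM (mul_nonneg hMp hup)
        linarith [this, mul_assoc a (M ^ (1 / p)) (M ^ (1 / p) * u ^ (1 / p))]
      nlinarith
    have step : 1 / 2 * m * (b + c * z ^ (1 / p)) ≤ a * z ^ (2 / p) := by
      have hmhalf : (0:ℝ) ≤ 1 / 2 * m := by positivity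
      calc 1 / 2 * m * (b + c * z ^ (1 / p))
          ≤ 1 / 2 * m * (a * M ^ (2 / p) * (1 + u ^ (1 / p))) :=
            mul_le_mul_of_nonneg_left hbound hmhalf
        _ = 1 / 2 * (a * M ^ (2 / p)) * (m * (1 + u ^ (1 / p))) := by ring
        _ ≤ 1 / 2 * (a * M ^ (2 / p)) * (2 * u ^ (2 / p)) :=
            mul_le_mul_of_nonneg_left central (by positivity)
        _ = a * (M ^ (2 / p) * u ^ (2 / p)) := by ring
        _ = a * z ^ (2 / p) := by rw [hz2]
    have hgoal : 1 / 2 * m ≤ a * z ^ (2 / p) / (b + c * z ^ (1 / p)) :=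
      (le_div_iff₀ hden).mpr step
    apply Real.exp_le_exp.mpr
    rw [neg_div, ← hm_def]
    linarith
  -- integrability of the composed bound
  have hgM_int : IntegrableOn (fun z => g (M⁻¹ * z)) (Set.Ioi 0) := by
    have := (integrableOn_Ioi_comp_mul_left_iff g 0 (inv_pos.mpr hM)).mpr
    simpa using this (by simpa using hg_int)
  have hf_meas : AEStronglyMeasurable
      (fun z : ℝ => Real.exp (-(a * z ^ (2 / p)) / (b + c * z ^ (1 / p))))
      (volume.restrict (Set.Ioi 0)) := by
    apply Measurable.aestronglyMeasurable
    fun_prop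
  have hf_int : IntegrableOn
      (fun z : ℝ => Real.exp (-(a * z ^ (2 / p)) / (b + c * z ^ (1 / p)))) (Set.Ioi 0) := by
    apply Integrable.mono' hgM_int hf_meas
    filter_upwards [ae_restrict_mem measurableSet_Ioi] with z hz
    rw [Real.norm_eq_abs, abs_of_nonneg (Real.exp_pos _).le]
    exact key z hz
  refine ⟨hf_int, hg_int, ?_⟩
  have hint : (∫ z in Set.Ioi (0:ℝ), Real.exp (-(a * z ^ (2 / p)) / (b + c * z ^ (1 / p)))) ≤
      ∫ z in Set.Ioi (0:ℝ), g (M⁻¹ * z) :=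
    setIntegral_mono_on hf_int hgM_int measurableSet_Ioi key
  have heq : (∫ z in Set.Ioi (0:ℝ), g (M⁻¹ * z)) = M * ∫ z in Set.Ioi (0:ℝ), g z := by
    rw [integral_comp_mul_left_Ioi g 0 (inv_pos.mpr hM)]
    simp [smul_eq_mul]
  have hgpos : 0 ≤ ∫ z in Set.Ioi (0:ℝ), g z :=
    setIntegral_nonneg measurableSet_Ioi fun z _ => hg_nonneg z
  rw [heq] at hint
  calc (∫ z in Set.Ioi (0:ℝ), Real.exp (-(a * z ^ (2 / p)) / (b + c * z ^ (1 / p))))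
      ≤ M * ∫ z in Set.Ioi (0:ℝ), g z := hint
    _ ≤ (2 * ∫ z in Set.Ioi (0:ℝ), g z) * M := by nlinarith [mul_nonneg hgpos hM.le]
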